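/- Let q be a prime power, F a finite extension field of GF(q), and let G₁, …, G_s ∈ F[X] be nonzero pairwise coprime polynomials. Let α₁, …, αₙ be pairwise distinct elements of F with Gᵢ(αₖ) ≠ 0 for all i and k, and let j ≥ 1. Then the GF(q)-dimension k of the Goppa code Γ(L, ∏ᵢ Gᵢ^j) satisfies k ≥ n − Σᵢ rᵢ, where rᵢ = n − dim_{GF(q)} Γ(L, Gᵢ^j) is the redundancy of the code Γ(L, Gᵢ^j). -/

import Mathlib

open Polynomial

noncomputable def goppaSum {K F : Type*} [Field K] [Field F] [Algebra K F] {n : ℕ}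
    (α : Fin n → F) (c : Fin n → K) : Polynomial F :=
  ∑ i, Polynomial.C (algebraMap K F (c i)) *
    ∏ j ∈ Finset.univ.erase i, (Polynomial.X - Polynomial.C (α j))

/-- The Goppa code `Γ(L, G)` as a `GF(q)`-subspace of `GF(q)ⁿ`. -/
noncomputable def goppaCode {K F : Type*} [Field K] [Field F] [Algebra K F] {n : ℕ}
    (α : Fin n → F) (G : Polynomial F) : Submodule K (Fin n → K) where
  carrier := {c | G ∣ goppaSum α c}
  add_mem' := by
    intro a b ha hb
    have h : goppaSum α (a + b) = goppaSum α a + goppaSum α b := by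
      simp only [goppaSum, Pi.add_apply, map_add, add_mul, Finset.sum_add_distrib]
    simp only [Set.mem_setOf_eq] at *
    rw [h]
    exact dvd_add ha hb
  zero_mem' := by
    simp only [Set.mem_setOf_eq, goppaSum, Pi.zero_apply, map_zero, Polynomial.C_0,
      zero_mul, Finset.sum_const_zero]
    exact dvd_zero _
  smul_mem' := by
    intro k c hc
    have h : goppaSum α (k • c) = Polynomial.C (algebraMap K F k) * goppaSum α c := by
      simp only [goppaSum, Pi.smul_apply, smul_eq_mul, map_mul, Finset.mul_sum, mul_assoc]
    simp only [Set.mem_setOf_eq] at *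
    rw [h]
    exact Dvd.dvd.mul_left hc _

open Module in
private lemma goppa_inf_finrank_ge {K V : Type*} [Field K] [AddCommGroup V] [Module K V]
    [FiniteDimensional K V] {s : ℕ} (W : Fin s → Submodule K V) :
    finrank K V - ∑ i, (finrank K V - finrank K (W i)) ≤ finrank K ↥(⨅ i, W i) := by
  classical
  have main : ∀ t : Finset (Fin s),
      finrank K V - ∑ i ∈ t, (finrank K V - finrank K (W i)) ≤
        finrank K ↥(⨅ i ∈ t, W i) := by
    intro t
    induction t using Finset.induction with
    | empty =>
      rw [show (⨅ i ∈ (∅ : Finset (Fin s)), W i) = ⊤ by simp]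
      simp [finrank_top]
    | insert a t ha ih =>
      rw [Finset.sum_insert ha, Finset.iInf_insert]
      set I := ⨅ i ∈ t, W i
      have h1 : finrank K ↥(W a ⊔ I) + finrank K ↥(W a ⊓ I) =
          finrank K ↥(W a) + finrank K ↥I :=
        Submodule.finrank_sup_add_finrank_inf_eq _ _
      have h2 : finrank K ↥(W a ⊔ I) ≤ finrank K V := Submodule.finrank_le _
      have h3 : finrank K ↥(W a) ≤ finrank K V := Submodule.finrank_le _
      have h4 : finrank K ↥I ≤ finrank K V := Submodule.finrank_le _
      omega
  have := main Finset.univ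
  rw [show (⨅ i ∈ (Finset.univ : Finset (Fin s)), W i) = ⨅ i, W i by simp] at this
  simpa using this

/-- for pairwise coprime nonzero polynomials `G₁, …, G_s`, the dimension of
`Γ(L, ∏ᵢ Gᵢ^j)` is at least `n − Σᵢ rᵢ` where `rᵢ` is the redundancy of `Γ(L, Gᵢ^j)`. -/
theorem goppa_dim_product_ge {K F : Type*} [Field K] [Fintype K]
    [Field F] [Fintype F] [Algebra K F] {n s : ℕ}
    (G : Fin s → Polynomial F) (hG : ∀ i, G i ≠ 0)
    (hcop : ∀ i j : Fin s, i ≠ j → IsCoprime (G i) (G j))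
    (α : Fin n → F) (hα : Function.Injective α)
    (heval : ∀ (i : Fin s) (k : Fin n), (G i).eval (α k) ≠ 0)
    (j : ℕ) (hj : 1 ≤ j) :
    n - ∑ i, (n - Module.finrank K (goppaCode (K := K) α ((G i) ^ j))) ≤
      Module.finrank K (goppaCode (K := K) α (∏ i, (G i) ^ j)) := by
  classical
  have heq : goppaCode (K := K) α (∏ i, (G i) ^ j) =
      ⨅ i, goppaCode (K := K) α ((G i) ^ j) := by
    ext c
    simp only [Submodule.mem_iInf]
    constructor
    · intro hc i
      exact dvd_trans (Finset.dvd_prod_of_mem (fun i => G i ^ j) (Finset.mem_univ i)) hc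
    · intro hc
      exact Fintype.prod_dvd_of_coprime
        (fun i k hik => (hcop i k hik).pow) hc
  rw [heq]
  have := goppa_inf_finrank_ge (fun i => goppaCode (K := K) α ((G i) ^ j))
  rwa [Module.finrank_pi K, Fintype.card_fin] at this
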